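/- Let d ≥ 3, 0 < s < 1, and let b : ℝ^d → ℝ^d be measurable with |b(x)| ≤ 1_{{|x₁|<1}}(x) · |x₁|^{s−1}, where x = (x₁,…,x_d). Then b belongs to the Kato class K^{d+1}_0: for every δ > 0 there exists λ > 0 such that ess sup_{y ∈ ℝ^d} ∫_{ℝ^d} |b(x)| (λ−Δ)^{−1/2}(x,y) dx ≤ δ. -/

import Mathlib

open MeasureTheory Filter Topology

noncomputable section

abbrev E (d : ℕ) := EuclideanSpace ℝ (Fin d)

/-- The kernel `(λ−Δ)^{−s/2}(x,y)` for real `λ > 0`: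
`Γ(s/2)⁻¹ ∫₀^∞ t^{s/2−1} e^{−λt} (4πt)^{−d/2} e^{−|x−y|²/(4t)} dt`. -/
def rker (d : ℕ) (s lam : ℝ) (x y : E d) : ℝ :=
  (Real.Gamma (s / 2))⁻¹ *
    ∫ t in Set.Ioi (0 : ℝ),
      t ^ (s / 2 - 1) * Real.exp (-(lam * t)) *
        ((4 * Real.pi * t) ^ (-(d : ℝ) / 2) * Real.exp (-(‖x - y‖ ^ 2 / (4 * t))))

/-- The operator `(λ−Δ)^{−s/2}` applied to a function `f`. -/
def rop (d : ℕ) (s lam : ℝ) (f : E d → ℝ) (x : E d) : ℝ :=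
  ∫ y, rker d s lam x y * f y


open Set Real

set_option maxHeartbeats 1000000


lemma gauss_integrable {t : ℝ} (ht : 0 < t) (c : ℝ) :
    Integrable (fun u : ℝ => Real.exp (-(((u - c) ^ 2) / (4 * t)))) := by
  have h := (integrable_exp_neg_mul_sq (show (0:ℝ) < 1/(4*t) by positivity)).comp_sub_right c
  refine h.congr (Filter.Eventually.of_forall fun u => ?_)
  show Real.exp (-(1/(4*t)) * (u - c) ^ 2) = Real.exp (-(((u - c) ^ 2) / (4 * t)))
  rw [show -(1/(4*t)) * (u - c) ^ 2 = -(((u - c) ^ 2) / (4 * t)) from by ring]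

lemma gauss_integral {t : ℝ} (ht : 0 < t) (c : ℝ) :
    ∫ u : ℝ, Real.exp (-(((u - c) ^ 2) / (4 * t))) = Real.sqrt (4 * Real.pi * t) := by
  have h1 : (fun u : ℝ => Real.exp (-(((u - c) ^ 2) / (4 * t))))
      = (fun u : ℝ => (fun v : ℝ => Real.exp (-((v ^ 2) / (4 * t)))) (u - c)) := rfl
  rw [h1, integral_sub_right_eq_self (fun v : ℝ => Real.exp (-((v ^ 2) / (4 * t)))) c]
  have h2 : (fun v : ℝ => Real.exp (-((v ^ 2) / (4 * t))))
      = fun v : ℝ => Real.exp (-(1/(4*t)) * v ^ 2) := by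
    funext v
    rw [show -(1/(4*t)) * v ^ 2 = -((v ^ 2) / (4 * t)) from by ring]
  rw [h2, integral_gaussian]
  rw [show Real.pi / (1/(4*t)) = 4 * Real.pi * t from by field_simp]



lemma my_integrable_comp_abs {f : ℝ → ℝ} (hf : IntegrableOn f (Ioi 0)) :
    Integrable (fun x => f |x|) := by
  have h1 : IntegrableOn (fun x => f |x|) (Ioi 0) := by
    refine hf.congr_fun (fun x hx => ?_) measurableSet_Ioi
    rw [abs_of_pos hx]
  have h2 : IntegrableOn (fun x => f |x|) (Iic 0) := by
    rw [← Measure.map_neg_eq_self (volume : Measure ℝ)]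
    have m : MeasurableEmbedding fun x : ℝ => -x := (Homeomorph.neg ℝ).measurableEmbedding
    rw [m.integrableOn_map_iff]
    simp_rw [Function.comp_def, abs_neg, neg_preimage, neg_Iic, neg_zero]
    exact Iff.mpr integrableOn_Ici_iff_integrableOn_Ioi h1
  have := h2.union h1
  rwa [Iic_union_Ioi, integrableOn_univ] at this

lemma wF_integrableOn {s ε : ℝ} (hs0 : 0 < s) (hε : 0 < ε) :
    IntegrableOn (fun v : ℝ => if v < ε then v ^ (s - 1) else 0) (Ioi 0) := by
  have h0 : IntegrableOn (fun v : ℝ => v ^ (s - 1)) (Ioc 0 ε) := by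
    have := intervalIntegral.intervalIntegrable_rpow' (a := 0) (b := ε)
      (show (-1:ℝ) < s - 1 by linarith)
    rwa [intervalIntegrable_iff_integrableOn_Ioc_of_le hε.le] at this
  have heq : (fun v : ℝ => if v < ε then v ^ (s - 1) else 0)
      = Set.indicator (Iio ε) (fun v => v ^ (s - 1)) := by
    funext v; simp [Set.indicator_apply]
  rw [heq, IntegrableOn, integrable_indicator_iff measurableSet_Iio, IntegrableOn,
    Measure.restrict_restrict measurableSet_Iio]
  have : Iio ε ∩ Ioi 0 = Ioo 0 ε := by ext v; simp [and_comm]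
  rw [this]
  exact h0.mono_set Ioo_subset_Ioc_self

lemma w_integrable {s ε : ℝ} (hs0 : 0 < s) (hε : 0 < ε) :
    Integrable (fun u : ℝ => if |u| < ε then |u| ^ (s - 1) else 0) :=
  my_integrable_comp_abs (wF_integrableOn hs0 hε)

lemma w_integral {s ε : ℝ} (hs0 : 0 < s) (hε : 0 < ε) :
    ∫ u : ℝ, (if |u| < ε then |u| ^ (s - 1) else 0) = 2 * (ε ^ s / s) := by
  rw [show (∫ u : ℝ, (if |u| < ε then |u| ^ (s - 1) else 0))
      = 2 * ∫ v in Ioi (0:ℝ), (if v < ε then v ^ (s - 1) else 0) from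
    integral_comp_abs (f := fun v : ℝ => if v < ε then v ^ (s - 1) else 0)]
  have heq : (fun v : ℝ => if v < ε then v ^ (s - 1) else 0)
      = Set.indicator (Iio ε) (fun v => v ^ (s - 1)) := by
    funext v; simp [Set.indicator_apply]
  rw [heq, setIntegral_indicator measurableSet_Iio]
  have : Ioi (0:ℝ) ∩ Iio ε = Ioo 0 ε := by ext v; simp
  rw [this, ← integral_Ioc_eq_integral_Ioo, ← intervalIntegral.integral_of_le hε.le,
    integral_rpow (Or.inl (by linarith))]
  rw [sub_add_cancel, Real.zero_rpow hs0.ne']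
  ring


lemma g0_integrable {s t : ℝ} (hs0 : 0 < s) (hs1 : s < 1) (ht : 0 < t) (c : ℝ) :
    Integrable (fun u : ℝ =>
      (if |u| < 1 then |u| ^ (s - 1) else 0) * Real.exp (-(((u - c) ^ 2) / (4 * t)))) := by
  have h := (w_integrable hs0 one_pos).bdd_mul
    (f := fun u : ℝ => Real.exp (-(((u - c) ^ 2) / (4 * t))))
    (c := 1) (Continuous.aestronglyMeasurable (by fun_prop))
    (Filter.Eventually.of_forall fun u => by
      rw [Real.norm_eq_abs, abs_of_nonneg (Real.exp_pos _).le, Real.exp_le_one_iff]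
      have : (0:ℝ) ≤ ((u - c) ^ 2) / (4 * t) := by positivity
      linarith)
  exact h.congr (Filter.Eventually.of_forall fun u => mul_comm _ _)

lemma sqrt_four_pi : Real.sqrt (4 * Real.pi) = 2 * Real.sqrt Real.pi := by
  rw [Real.sqrt_mul (by norm_num : (0:ℝ) ≤ 4),
    show Real.sqrt 4 = 2 by rw [show (4:ℝ) = 2 ^ 2 by norm_num, Real.sqrt_sq (by norm_num : (0:ℝ) ≤ 2)]]

lemma g0_integral_le {s t : ℝ} (hs0 : 0 < s) (hs1 : s < 1) (ht : 0 < t) (c : ℝ) :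
    ∫ u : ℝ, (if |u| < 1 then |u| ^ (s - 1) else 0) * Real.exp (-(((u - c) ^ 2) / (4 * t)))
      ≤ (2 / s + 2 * Real.sqrt Real.pi) * t ^ (s / 2) := by
  set ε : ℝ := Real.sqrt t with hεdef
  have hε : 0 < ε := Real.sqrt_pos.mpr ht
  have hεr : ε = t ^ ((1:ℝ)/2) := Real.sqrt_eq_rpow t
  have hpt : ∀ u : ℝ,
      (if |u| < 1 then |u| ^ (s - 1) else 0) * Real.exp (-(((u - c) ^ 2) / (4 * t)))
      ≤ (if |u| < ε then |u| ^ (s - 1) else 0)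
        + ε ^ (s - 1) * Real.exp (-(((u - c) ^ 2) / (4 * t))) := by
    intro u
    have hexp0 : (0:ℝ) ≤ Real.exp (-(((u - c) ^ 2) / (4 * t))) := (Real.exp_pos _).le
    have hexp1 : Real.exp (-(((u - c) ^ 2) / (4 * t))) ≤ 1 := by
      rw [Real.exp_le_one_iff]
      have : (0:ℝ) ≤ ((u - c) ^ 2) / (4 * t) := by positivity
      linarith
    have hrhs2 : (0:ℝ) ≤ ε ^ (s - 1) * Real.exp (-(((u - c) ^ 2) / (4 * t))) := by positivity
    by_cases h1 : |u| < 1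
    · rw [if_pos h1]
      by_cases h2 : |u| < ε
      · rw [if_pos h2]
        have := mul_le_of_le_one_right (Real.rpow_nonneg (abs_nonneg u) (s-1)) hexp1
        linarith
      · rw [if_neg h2]
        have hmono : |u| ^ (s - 1) ≤ ε ^ (s - 1) :=
          Real.rpow_le_rpow_of_nonpos hε (not_lt.mp h2) (by linarith)
        have := mul_le_mul_of_nonneg_right hmono hexp0
        linarith
    · rw [if_neg h1, zero_mul]
      have : (0:ℝ) ≤ (if |u| < ε then |u| ^ (s - 1) else 0) := by
        split
        · exact Real.rpow_nonneg (abs_nonneg u) _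
        · exact le_rfl
      linarith
  have hint1 : Integrable (fun u : ℝ =>
      (if |u| < ε then |u| ^ (s - 1) else 0)
        + ε ^ (s - 1) * Real.exp (-(((u - c) ^ 2) / (4 * t)))) :=
    (w_integrable hs0 hε).add ((gauss_integrable ht c).const_mul _)
  have hle := integral_mono (g0_integrable hs0 hs1 ht c) hint1 hpt
  rw [integral_add (w_integrable hs0 hε) ((gauss_integrable ht c).const_mul _),
    integral_const_mul, w_integral hs0 hε, gauss_integral ht c] at hle
  refine hle.trans (le_of_eq ?_)
  -- algebra: 2*(ε^s/s) + ε^(s-1)*√(4πt) = (2/s + 2√π) * t^(s/2)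
  have hts : ε ^ s = t ^ (s / 2) := by
    rw [hεr, ← Real.rpow_mul ht.le, show (1:ℝ)/2 * s = s/2 from by ring]
  have ht2 : ε ^ (s - 1) * Real.sqrt (4 * Real.pi * t)
      = 2 * Real.sqrt Real.pi * t ^ (s / 2) := by
    have h1 : Real.sqrt (4 * Real.pi * t) = 2 * Real.sqrt Real.pi * Real.sqrt t := by
      rw [show (4:ℝ) * Real.pi * t = (4 * Real.pi) * t from by ring,
        Real.sqrt_mul (by positivity : (0:ℝ) ≤ 4 * Real.pi), sqrt_four_pi]
    have h2 : ε ^ (s - 1) * Real.sqrt t = t ^ (s / 2) := by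
      rw [Real.sqrt_eq_rpow, hεr, ← Real.rpow_mul ht.le, ← Real.rpow_add ht,
        show (1:ℝ)/2 * (s - 1) + 1/2 = s/2 from by ring]
    rw [h1, show ε ^ (s - 1) * (2 * Real.sqrt Real.pi * Real.sqrt t)
        = 2 * Real.sqrt Real.pi * (ε ^ (s - 1) * Real.sqrt t) from by ring, h2]
  rw [hts] at *
  rw [ht2]
  ring

lemma lemC {d : ℕ} (hd : 0 < d) {s t : ℝ} (hs0 : 0 < s) (hs1 : s < 1) (ht : 0 < t)
    (y : E d) :
    ∫⁻ x : E d, ENNReal.ofReal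
        ((if |x ⟨0, hd⟩| < 1 then |x ⟨0, hd⟩| ^ (s - 1) else 0)
          * Real.exp (-(‖x - y‖ ^ 2 / (4 * t))))
      ≤ ENNReal.ofReal ((2 / s + 2 * Real.sqrt Real.pi) * t ^ (s / 2)
          * Real.sqrt (4 * Real.pi * t) ^ (d - 1)) := by
  classical
  set i0 : Fin d := ⟨0, hd⟩ with hi0
  set g : Fin d → ℝ → ℝ := fun i u =>
    (if i = i0 then (if |u| < 1 then |u| ^ (s - 1) else 0) else 1)
      * Real.exp (-(((u - y i) ^ 2) / (4 * t))) with hg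
  have hgint : ∀ i, Integrable (g i) := by
    intro i
    by_cases hi : i = i0
    · simpa [hg, hi] using g0_integrable hs0 hs1 ht (y i0)
    · simpa [hg, hi] using gauss_integrable ht (y i)
  have hgnn : ∀ i u, 0 ≤ g i u := by
    intro i u
    refine mul_nonneg ?_ (Real.exp_pos _).le
    split
    · split
      · exact Real.rpow_nonneg (abs_nonneg u) _
      · exact le_rfl
    · exact zero_le_one
  -- the function on E d
  set f : E d → ℝ := fun x =>
    (if |x i0| < 1 then |x i0| ^ (s - 1) else 0) * Real.exp (-(‖x - y‖ ^ 2 / (4 * t)))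
    with hf
  -- pointwise product identity
  have hprod : ∀ z : Fin d → ℝ,
      f ((MeasurableEquiv.toLp 2 (Fin d → ℝ)) z) = ∏ i, g i (z i) := by
    intro z
    have hcoord : ∀ i, ((MeasurableEquiv.toLp 2 (Fin d → ℝ)) z) i = z i := by
      intro i; rfl
    have hnorm : ‖(MeasurableEquiv.toLp 2 (Fin d → ℝ)) z - y‖ ^ 2
        = ∑ i, (z i - y i) ^ 2 := by
      rw [EuclideanSpace.norm_eq, Real.sq_sqrt (by positivity)]
      refine Finset.sum_congr rfl fun i _ => ?_
      rw [show ((MeasurableEquiv.toLp 2 (Fin d → ℝ)) z - y) i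
          = ((MeasurableEquiv.toLp 2 (Fin d → ℝ)) z) i - y i from rfl, hcoord,
        Real.norm_eq_abs, sq_abs]
    have hexp : Real.exp (-(‖(MeasurableEquiv.toLp 2 (Fin d → ℝ)) z - y‖ ^ 2 / (4 * t)))
        = ∏ i, Real.exp (-(((z i - y i) ^ 2) / (4 * t))) := by
      rw [hnorm, Finset.sum_div, ← Finset.sum_neg_distrib, Real.exp_sum]
    have hw : (∏ i, (if i = i0 then (if |z i| < 1 then |z i| ^ (s - 1) else 0) else 1))
        = (if |z i0| < 1 then |z i0| ^ (s - 1) else 0) := by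
      rw [Finset.prod_ite_eq' Finset.univ i0
        (fun i => (if |z i| < 1 then |z i| ^ (s - 1) else 0))]
      simp
    calc f ((MeasurableEquiv.toLp 2 (Fin d → ℝ)) z)
        = (if |z i0| < 1 then |z i0| ^ (s - 1) else 0)
          * ∏ i, Real.exp (-(((z i - y i) ^ 2) / (4 * t))) := by
          rw [hf]; simp only [hcoord i0, hexp]
      _ = (∏ i, (if i = i0 then (if |z i| < 1 then |z i| ^ (s - 1) else 0) else 1))
          * ∏ i, Real.exp (-(((z i - y i) ^ 2) / (4 * t))) := by rw [hw]
      _ = ∏ i, g i (z i) := by rw [← Finset.prod_mul_distrib]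
  -- measurability of f
  have hmeas : Measurable fun x : E d => ENNReal.ofReal (f x) := by
    apply Measurable.ennreal_ofReal
    apply Measurable.mul
    · have h0 : Measurable fun x : E d => x i0 :=
        (measurable_pi_apply i0).comp (MeasurableEquiv.toLp 2 (Fin d → ℝ)).symm.measurable
      exact (Measurable.ite (measurableSet_lt h0.abs measurable_const)
        (h0.abs.pow_const _) measurable_const)
    · exact (Real.continuous_exp.comp
        (((((continuous_id.sub continuous_const).norm).pow 2).div_const (4 * t)).neg)).measurable
  -- transfer to pi measure
  have htrans : ∫⁻ x : E d, ENNReal.ofReal (f x)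
      = ∫⁻ z : Fin d → ℝ, ENNReal.ofReal (∏ i, g i (z i)) := by
    rw [← ((EuclideanSpace.volume_preserving_symm_measurableEquiv_toLp (Fin d)).symm).lintegral_comp hmeas]
    refine lintegral_congr fun z => ?_
    rw [MeasurableEquiv.symm_symm, hprod z]
  have hPint : Integrable (fun z : Fin d → ℝ => ∏ i, g i (z i)) :=
    Integrable.fintype_prod (f := g) hgint
  have hlin : ∫⁻ z : Fin d → ℝ, ENNReal.ofReal (∏ i, g i (z i))
      = ENNReal.ofReal (∏ i, ∫ u : ℝ, g i u) := by
    rw [← ofReal_integral_eq_lintegral_ofReal hPint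
      (Filter.Eventually.of_forall fun z => Finset.prod_nonneg fun i _ => hgnn i (z i))]
    rw [integral_fintype_prod_volume_eq_prod g]
  -- evaluate the product
  have hgauss_i : ∀ i : Fin d, i ≠ i0 → (∫ u : ℝ, g i u) = Real.sqrt (4 * Real.pi * t) := by
    intro i hne
    have hgi : g i = fun u => Real.exp (-(((u - y i) ^ 2) / (4 * t))) := by
      funext u; rw [hg]; simp only [if_neg hne, one_mul]
    rw [hgi]; exact gauss_integral ht (y i)
  have hgi0 : g i0 = fun u => (if |u| < 1 then |u| ^ (s - 1) else 0)
      * Real.exp (-(((u - y i0) ^ 2) / (4 * t))) := by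
    funext u; rw [hg]; simp
  have hprodval : (∏ i, ∫ u : ℝ, g i u)
      = (∫ u : ℝ, (if |u| < 1 then |u| ^ (s - 1) else 0)
          * Real.exp (-(((u - y i0) ^ 2) / (4 * t))))
        * Real.sqrt (4 * Real.pi * t) ^ (d - 1) := by
    rw [← Finset.mul_prod_erase Finset.univ (fun i => ∫ u : ℝ, g i u) (Finset.mem_univ i0)]
    rw [Finset.prod_congr rfl (fun i hi => hgauss_i i (Finset.mem_erase.1 hi).1),
      Finset.prod_const, Finset.card_erase_of_mem (Finset.mem_univ i0), Finset.card_univ,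
      Fintype.card_fin, hgi0]
  rw [htrans, hlin, hprodval]
  refine ENNReal.ofReal_le_ofReal ?_
  exact mul_le_mul_of_nonneg_right (g0_integral_le hs0 hs1 ht (y i0))
    (pow_nonneg (Real.sqrt_nonneg _) _)

lemma alg1 {d : ℕ} (hd : 0 < d) {s t C e1 : ℝ} (ht : 0 < t) :
    (t ^ ((1:ℝ)/2 - 1) * e1 * (4 * Real.pi * t) ^ (-(d:ℝ)/2))
      * (C * t ^ (s/2) * Real.sqrt (4 * Real.pi * t) ^ (d - 1))
    = (C * (4 * Real.pi) ^ (-(1:ℝ)/2)) * (t ^ (s/2 - 1) * e1) := by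
  have h4πt : (0:ℝ) < 4 * Real.pi * t := by positivity
  have e2 : Real.sqrt (4 * Real.pi * t) ^ (d - 1)
      = (4 * Real.pi * t) ^ (((d:ℝ) - 1) / 2) := by
    rw [Real.sqrt_eq_rpow, ← Real.rpow_natCast ((4 * Real.pi * t) ^ ((1:ℝ)/2)) (d - 1),
      ← Real.rpow_mul h4πt.le, Nat.cast_sub hd, Nat.cast_one]
    rw [show (1:ℝ)/2 * ((d:ℝ) - 1) = ((d:ℝ) - 1) / 2 from by ring]
  have e3 : (4 * Real.pi * t) ^ (-(d:ℝ)/2) * (4 * Real.pi * t) ^ (((d:ℝ) - 1) / 2)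
      = (4 * Real.pi) ^ (-(1:ℝ)/2) * t ^ (-(1:ℝ)/2) := by
    rw [← Real.rpow_add h4πt, show -(d:ℝ)/2 + ((d:ℝ) - 1)/2 = -(1:ℝ)/2 from by ring,
      Real.mul_rpow (by positivity : (0:ℝ) ≤ 4 * Real.pi) ht.le]
  have e4 : t ^ ((1:ℝ)/2 - 1) * t ^ (s/2) * t ^ (-(1:ℝ)/2) = t ^ (s/2 - 1) := by
    rw [← Real.rpow_add ht, ← Real.rpow_add ht,
      show (1:ℝ)/2 - 1 + s/2 + -(1:ℝ)/2 = s/2 - 1 from by ring]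
  calc (t ^ ((1:ℝ)/2 - 1) * e1 * (4 * Real.pi * t) ^ (-(d:ℝ)/2))
        * (C * t ^ (s/2) * Real.sqrt (4 * Real.pi * t) ^ (d - 1))
      = C * e1 * ((4 * Real.pi * t) ^ (-(d:ℝ)/2) * (4 * Real.pi * t) ^ (((d:ℝ) - 1) / 2))
        * (t ^ ((1:ℝ)/2 - 1) * t ^ (s/2)) := by rw [e2]; ring
    _ = C * e1 * ((4 * Real.pi) ^ (-(1:ℝ)/2) * t ^ (-(1:ℝ)/2))
        * (t ^ ((1:ℝ)/2 - 1) * t ^ (s/2)) := by rw [e3]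
    _ = C * (4 * Real.pi) ^ (-(1:ℝ)/2) * e1
        * (t ^ ((1:ℝ)/2 - 1) * t ^ (s/2) * t ^ (-(1:ℝ)/2)) := by ring
    _ = (C * (4 * Real.pi) ^ (-(1:ℝ)/2)) * (t ^ (s/2 - 1) * e1) := by rw [e4]; ring

lemma tint_integrable {s lam : ℝ} (hs0 : 0 < s) (hlam : 0 < lam) :
    IntegrableOn (fun t : ℝ => t ^ (s/2 - 1) * Real.exp (-(lam * t))) (Ioi 0) := by
  have h := integrableOn_rpow_mul_exp_neg_mul_rpow
    (show (-1:ℝ) < s/2 - 1 by linarith) one_pos hlam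
  have heq : (fun x : ℝ => x ^ (s/2 - 1) * Real.exp (-lam * x ^ (1:ℝ)))
      = fun t : ℝ => t ^ (s/2 - 1) * Real.exp (-(lam * t)) := by
    funext x; rw [Real.rpow_one, neg_mul]
  rwa [heq] at h

/-- a vector field dominated by `1_{|x₁|<1} |x₁|^{s−1}` (`0 < s < 1`)
belongs to the Kato class `K^{d+1}_0`. -/
theorem statement1 (d : ℕ) (hd : 3 ≤ d) (s : ℝ) (hs0 : 0 < s) (hs1 : s < 1)
    (b : E d → E d) (hb_meas : Measurable b)
    (hb : ∀ x : E d,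
      ‖b x‖ ≤ Set.indicator {x : E d | |x ⟨0, by omega⟩| < 1}
        (fun x : E d => |x ⟨0, by omega⟩| ^ (s - 1)) x) :
    ∀ δ : ℝ, 0 < δ → ∃ lam : ℝ, 0 < lam ∧
      ∀ᵐ y : E d ∂volume, (∫ x, ‖b x‖ * rker d 1 lam x y) ≤ δ := by
  intro δ hδ
  have hd0 : 0 < d := by omega
  have hπ : (0:ℝ) < Real.pi := Real.pi_pos
  set C : ℝ := 2 / s + 2 * Real.sqrt Real.pi with hCdef
  have hC : 0 < C := by positivity
  have hΓh : (0:ℝ) < Real.Gamma (1 / 2) := Real.Gamma_pos_of_pos (by norm_num)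
  have hΓs : (0:ℝ) < Real.Gamma (s / 2) := Real.Gamma_pos_of_pos (by positivity)
  have h4π : (0:ℝ) < (4 * Real.pi) ^ (-(1:ℝ)/2) := Real.rpow_pos_of_pos (by positivity) _
  set A : ℝ := (Real.Gamma ((1:ℝ) / 2))⁻¹ * (C * (4 * Real.pi) ^ (-(1:ℝ)/2)
      * ((1:ℝ) * Real.Gamma (s / 2))) with hAdef
  have hA : 0 < A := by positivity
  set lam : ℝ := max 1 ((A / δ) ^ ((2:ℝ) / s)) with hlamdef
  have hlam : (0:ℝ) < lam := lt_of_lt_of_le one_pos (le_max_left _ _)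
  have hAδ : 0 < A / δ := by positivity
  have hfinal : A * ((1 / lam) ^ (s / 2)) ≤ δ := by
    have h1 : (A / δ) ^ ((2:ℝ)/s) ≤ lam := le_max_right _ _
    have h2 : (1:ℝ)/lam ≤ (δ / A) ^ ((2:ℝ)/s) := by
      rw [show δ / A = (A / δ)⁻¹ from by rw [inv_div], Real.inv_rpow hAδ.le]
      rw [one_div]
      exact inv_anti₀ (Real.rpow_pos_of_pos hAδ _) h1
    have h3 : ((1:ℝ)/lam) ^ (s/2) ≤ δ / A := by
      have h4 := Real.rpow_le_rpow (by positivity) h2 (by positivity : (0:ℝ) ≤ s/2)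
      rwa [← Real.rpow_mul (by positivity : (0:ℝ) ≤ δ / A),
        show (2:ℝ)/s * (s/2) = 1 from by field_simp, Real.rpow_one] at h4
    calc A * ((1/lam) ^ (s/2)) ≤ A * (δ / A) :=
          mul_le_mul_of_nonneg_left h3 hA.le
      _ = δ := by field_simp
  refine ⟨lam, hlam, Filter.Eventually.of_forall fun y => ?_⟩
  -- fixed y
  set i0 : Fin d := ⟨0, hd0⟩ with hi0
  set w : E d → ℝ := fun x => if |x i0| < 1 then |x i0| ^ (s - 1) else 0 with hw
  have hwnn : ∀ x, 0 ≤ w x := by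
    intro x; rw [hw]; dsimp only; split
    · exact Real.rpow_nonneg (abs_nonneg _) _
    · exact le_rfl
  set F : ℝ → E d → ℝ := fun t x => t ^ ((1:ℝ) / 2 - 1) * Real.exp (-(lam * t)) *
      ((4 * Real.pi * t) ^ (-(d:ℝ) / 2) * Real.exp (-(‖x - y‖ ^ 2 / (4 * t)))) with hF
  have hrker : ∀ x : E d, rker d 1 lam x y
      = (Real.Gamma ((1:ℝ) / 2))⁻¹ * ∫ t in Ioi (0:ℝ), F t x := fun x => rfl
  have hFnn : ∀ t : ℝ, t ∈ Ioi (0:ℝ) → ∀ x : E d, 0 ≤ F t x := by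
    intro t ht x
    have ht' : 0 < t := ht
    rw [hF]; dsimp only; positivity
  have hrknn : ∀ x, 0 ≤ rker d 1 lam x y := by
    intro x
    rw [hrker x]
    exact mul_nonneg (inv_nonneg.2 hΓh.le)
      (setIntegral_nonneg measurableSet_Ioi fun t ht => hFnn t ht x)
  by_cases hint : Integrable (fun x : E d => ‖b x‖ * rker d 1 lam x y)
  swap
  · rw [integral_undef hint]; exact hδ.le
  rw [integral_eq_lintegral_of_nonneg_ae
    (Filter.Eventually.of_forall fun x => mul_nonneg (norm_nonneg _) (hrknn x)) hint.1]
  refine ENNReal.toReal_le_of_le_ofReal hδ.le ?_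
  -- measurability for the swap
  have hwmeas : Measurable w := by
    have h0 : Measurable fun x : E d => x i0 :=
      (measurable_pi_apply i0).comp (MeasurableEquiv.toLp 2 (Fin d → ℝ)).symm.measurable
    exact Measurable.ite (measurableSet_lt h0.abs measurable_const)
      (h0.abs.pow_const _) measurable_const
  have hFm : Measurable fun p : E d × ℝ => F p.2 p.1 := by
    apply Measurable.mul
    · exact (measurable_snd.pow_const _).mul
        (Real.measurable_exp.comp ((measurable_snd.const_mul lam).neg))
    · refine Measurable.mul ((measurable_snd.const_mul (4 * Real.pi)).pow_const _) ?_
      refine Real.measurable_exp.comp (Measurable.neg ?_)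
      exact (((continuous_norm.comp (continuous_fst.sub continuous_const)).pow 2).measurable).div
        (measurable_snd.const_mul 4)
  have hswap : ∫⁻ x : E d, ∫⁻ t in Ioi (0:ℝ), ENNReal.ofReal (w x) * ENNReal.ofReal (F t x)
      = ∫⁻ t in Ioi (0:ℝ), ∫⁻ x : E d, ENNReal.ofReal (w x) * ENNReal.ofReal (F t x) := by
    exact lintegral_lintegral_swap
      (((hwmeas.comp measurable_fst).ennreal_ofReal.mul hFm.ennreal_ofReal).aemeasurable)
  -- pointwise bound
  have hptw : ∀ x : E d, ENNReal.ofReal (‖b x‖ * rker d 1 lam x y)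
      ≤ ENNReal.ofReal (Real.Gamma ((1:ℝ)/2))⁻¹
        * ∫⁻ t in Ioi (0:ℝ), ENNReal.ofReal (w x) * ENNReal.ofReal (F t x) := by
    intro x
    rw [ENNReal.ofReal_mul (norm_nonneg _)]
    have h1 : ENNReal.ofReal ‖b x‖ ≤ ENNReal.ofReal (w x) := by
      refine ENNReal.ofReal_le_ofReal ?_
      have h := hb x
      rwa [Set.indicator_apply] at h
    have h2 : ENNReal.ofReal (rker d 1 lam x y)
        ≤ ENNReal.ofReal (Real.Gamma ((1:ℝ)/2))⁻¹ * ∫⁻ t in Ioi (0:ℝ), ENNReal.ofReal (F t x) := by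
      rw [hrker x, ENNReal.ofReal_mul (inv_nonneg.2 hΓh.le), ENNReal.ofReal_inv_of_pos hΓh]
      refine mul_le_mul_right ?_ _
      by_cases hFi : Integrable (fun t => F t x) (volume.restrict (Ioi 0))
      · rw [ofReal_integral_eq_lintegral_ofReal hFi
          ((ae_restrict_iff' measurableSet_Ioi).2 (ae_of_all _ fun t ht => hFnn t ht x))]
      · rw [integral_undef hFi]; simp
    calc ENNReal.ofReal ‖b x‖ * ENNReal.ofReal (rker d 1 lam x y)
        ≤ ENNReal.ofReal (w x) * (ENNReal.ofReal (Real.Gamma ((1:ℝ)/2))⁻¹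
            * ∫⁻ t in Ioi (0:ℝ), ENNReal.ofReal (F t x)) := mul_le_mul' h1 h2
      _ = ENNReal.ofReal (Real.Gamma ((1:ℝ)/2))⁻¹
            * (ENNReal.ofReal (w x) * ∫⁻ t in Ioi (0:ℝ), ENNReal.ofReal (F t x)) := by ring
      _ = ENNReal.ofReal (Real.Gamma ((1:ℝ)/2))⁻¹
            * ∫⁻ t in Ioi (0:ℝ), ENNReal.ofReal (w x) * ENNReal.ofReal (F t x) := by
          rw [lintegral_const_mul' (ENNReal.ofReal (w x)) _ ENNReal.ofReal_ne_top]
  -- per-t bound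
  have hstep4 : ∀ t : ℝ, t ∈ Ioi (0:ℝ) →
      ∫⁻ x : E d, ENNReal.ofReal (w x) * ENNReal.ofReal (F t x)
        ≤ ENNReal.ofReal (C * (4 * Real.pi) ^ (-(1:ℝ)/2))
          * ENNReal.ofReal (t ^ (s/2 - 1) * Real.exp (-(lam * t))) := by
    intro t ht
    have ht' : (0:ℝ) < t := ht
    have hct : (0:ℝ) ≤ t ^ ((1:ℝ)/2 - 1) * Real.exp (-(lam * t))
        * (4 * Real.pi * t) ^ (-(d:ℝ)/2) := by positivity
    have hsplit : ∀ x : E d, ENNReal.ofReal (w x) * ENNReal.ofReal (F t x)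
        = ENNReal.ofReal (t ^ ((1:ℝ)/2 - 1) * Real.exp (-(lam * t))
            * (4 * Real.pi * t) ^ (-(d:ℝ)/2))
          * ENNReal.ofReal (w x * Real.exp (-(‖x - y‖ ^ 2 / (4 * t)))) := by
      intro x
      rw [← ENNReal.ofReal_mul (hwnn x), ← ENNReal.ofReal_mul hct]
      congr 1
      rw [hF]; dsimp only; ring
    calc ∫⁻ x : E d, ENNReal.ofReal (w x) * ENNReal.ofReal (F t x)
        = ENNReal.ofReal (t ^ ((1:ℝ)/2 - 1) * Real.exp (-(lam * t))
            * (4 * Real.pi * t) ^ (-(d:ℝ)/2))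
          * ∫⁻ x : E d, ENNReal.ofReal (w x * Real.exp (-(‖x - y‖ ^ 2 / (4 * t)))) := by
          rw [← lintegral_const_mul' _ _ ENNReal.ofReal_ne_top]
          exact lintegral_congr fun x => hsplit x
      _ ≤ ENNReal.ofReal (t ^ ((1:ℝ)/2 - 1) * Real.exp (-(lam * t))
            * (4 * Real.pi * t) ^ (-(d:ℝ)/2))
          * ENNReal.ofReal (C * t ^ (s/2) * Real.sqrt (4 * Real.pi * t) ^ (d - 1)) := by
          exact mul_le_mul_right (lemC hd0 hs0 hs1 ht' y) _
      _ = ENNReal.ofReal (C * (4 * Real.pi) ^ (-(1:ℝ)/2))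
          * ENNReal.ofReal (t ^ (s/2 - 1) * Real.exp (-(lam * t))) := by
          rw [← ENNReal.ofReal_mul hct, alg1 hd0 ht',
            ENNReal.ofReal_mul (by positivity : (0:ℝ) ≤ C * (4 * Real.pi) ^ (-(1:ℝ)/2))]
  -- t-integral value
  have htint : ∫⁻ t in Ioi (0:ℝ), ENNReal.ofReal (t ^ (s/2 - 1) * Real.exp (-(lam * t)))
      = ENNReal.ofReal ((1/lam) ^ (s/2) * Real.Gamma (s/2)) := by
    rw [← ofReal_integral_eq_lintegral_ofReal (tint_integrable hs0 hlam)
      ((ae_restrict_iff' measurableSet_Ioi).2 (ae_of_all _ fun t ht => by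
        have ht' : (0:ℝ) < t := ht
        positivity))]
    rw [show ∫ t in Ioi (0:ℝ), t ^ (s/2 - 1) * Real.exp (-(lam * t))
        = (1/lam) ^ (s/2) * Real.Gamma (s/2) from
      Real.integral_rpow_mul_exp_neg_mul_Ioi (by positivity) hlam]
  -- final chain
  calc ∫⁻ x : E d, ENNReal.ofReal (‖b x‖ * rker d 1 lam x y)
      ≤ ∫⁻ x : E d, ENNReal.ofReal (Real.Gamma ((1:ℝ)/2))⁻¹
          * ∫⁻ t in Ioi (0:ℝ), ENNReal.ofReal (w x) * ENNReal.ofReal (F t x) :=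
        lintegral_mono hptw
    _ = ENNReal.ofReal (Real.Gamma ((1:ℝ)/2))⁻¹
        * ∫⁻ x : E d, ∫⁻ t in Ioi (0:ℝ), ENNReal.ofReal (w x) * ENNReal.ofReal (F t x) :=
        lintegral_const_mul' _ _ (by simp)
    _ = ENNReal.ofReal (Real.Gamma ((1:ℝ)/2))⁻¹
        * ∫⁻ t in Ioi (0:ℝ), ∫⁻ x : E d, ENNReal.ofReal (w x) * ENNReal.ofReal (F t x) := by
        rw [hswap]
    _ ≤ ENNReal.ofReal (Real.Gamma ((1:ℝ)/2))⁻¹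
        * ∫⁻ t in Ioi (0:ℝ), ENNReal.ofReal (C * (4 * Real.pi) ^ (-(1:ℝ)/2))
          * ENNReal.ofReal (t ^ (s/2 - 1) * Real.exp (-(lam * t))) := by
        refine mul_le_mul_right ?_ _
        refine lintegral_mono_ae ((ae_restrict_iff' measurableSet_Ioi).2
          (ae_of_all _ fun t ht => hstep4 t ht))
    _ = ENNReal.ofReal (Real.Gamma ((1:ℝ)/2))⁻¹
        * (ENNReal.ofReal (C * (4 * Real.pi) ^ (-(1:ℝ)/2))
          * ENNReal.ofReal ((1/lam) ^ (s/2) * Real.Gamma (s/2))) := by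
        rw [lintegral_const_mul' _ _ ENNReal.ofReal_ne_top, htint]
    _ = ENNReal.ofReal (A * ((1/lam) ^ (s/2))) := by
        rw [← ENNReal.ofReal_mul (by positivity : (0:ℝ) ≤ C * (4 * Real.pi) ^ (-(1:ℝ)/2)),
          ENNReal.ofReal_inv_of_pos hΓh, ← ENNReal.ofReal_inv_of_pos hΓh,
          ← ENNReal.ofReal_mul (by positivity : (0:ℝ) ≤ (Real.Gamma ((1:ℝ)/2))⁻¹)]
        congr 1
        rw [hAdef]; ring
    _ ≤ ENNReal.ofReal δ := ENNReal.ofReal_le_ofReal hfinal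

end
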